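/- Let ρ be a 2-representation of a group G in a 2-category C. Then the assignment g ↦ Tr(ρ(g)) extends to a functor from the inertia groupoid Λ(G) to Set: for f, g ∈ G there are bijections ψ_f(g) : Tr(ρ(f)) → Tr(ρ(gfg⁻¹)) satisfying ψ(gh) = ψ(g)∘ψ(h) and ψ(1) = id. -/

import Mathlib

open CategoryTheory

universe v u

variable (G : Type*) [Group G] (V : Type u) [Category.{v} V]

/-- A 2-representation (categorical representation) of a group `G` on a category `V`:
functors `ρ(g)`, coherence isomorphisms `φ_{g,h} : ρ(g) ∘ ρ(h) ≅ ρ(gh)` and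
`φ₁ : ρ(1) ≅ id`, satisfying the associativity and unit conditions.
(`mult g h : rho h ⋙ rho g ≅ rho (g*h)` since `ρ(g) ∘ ρ(h)` applies `ρ(h)` first.) -/
structure TwoRep where
  rho : G → V ⥤ V
  mult : ∀ g h : G, rho h ⋙ rho g ≅ rho (g * h)
  unit : rho 1 ≅ 𝟭 V
  assoc : ∀ g h k : G,
    Functor.whiskerLeft (rho k) (mult g h).hom ≫ (mult (g * h) k).hom =
      Functor.whiskerRight (mult h k).hom (rho g) ≫ (mult g (h * k)).hom ≫
        eqToHom (show rho (g * (h * k)) = rho ((g * h) * k) by rw [mul_assoc])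
  unit_left : ∀ g : G,
    (mult 1 g).hom ≫ eqToHom (show rho (1 * g) = rho g by rw [one_mul]) =
      Functor.whiskerLeft (rho g) unit.hom ≫ (rho g).rightUnitor.hom
  unit_right : ∀ g : G,
    (mult g 1).hom ≫ eqToHom (show rho (g * 1) = rho g by rw [mul_one]) =
      Functor.whiskerRight unit.hom (rho g) ≫ (rho g).leftUnitor.hom

variable {G V}

/-- The conjugation map `ψ_f(g) : Tr(ρ(f)) → Tr(ρ(g f g⁻¹))` of categorical traces:
`φ ↦ Tr(φ_{g,f,g⁻¹}) ((ρ(g) ∘₀ φ ∘₀ ρ(g⁻¹)) ∘₁ u)` with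
`u = φ⁻¹_{g,g⁻¹} ∘₁ φ₁⁻¹ : id ⇒ ρ(g) ∘ ρ(g⁻¹)`. -/
def TwoRep.conj (R : TwoRep G V) (f g : G) (φ : 𝟭 V ⟶ R.rho f) :
    𝟭 V ⟶ R.rho (g * f * g⁻¹) :=
  R.unit.inv ≫
    eqToHom (show R.rho 1 = R.rho (g * g⁻¹) by simp) ≫
    (R.mult g g⁻¹).inv ≫
    Functor.whiskerLeft (R.rho g⁻¹) ((R.rho g).leftUnitor.inv ≫ Functor.whiskerRight φ (R.rho g)) ≫
    Functor.whiskerRight (R.mult f g⁻¹).hom (R.rho g) ≫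
    (R.mult g (f * g⁻¹)).hom ≫
    eqToHom (show R.rho (g * (f * g⁻¹)) = R.rho (g * f * g⁻¹) by rw [mul_assoc])



namespace TwoRep
variable (R : TwoRep G V)

lemma mult_hom_app_assoc (g h k : G) (X : V) :
    (R.mult g h).hom.app ((R.rho k).obj X) ≫ (R.mult (g*h) k).hom.app X =
    (R.rho g).map ((R.mult h k).hom.app X) ≫ (R.mult g (h*k)).hom.app X ≫
      eqToHom (show (R.rho (g*(h*k))).obj X = (R.rho (g*h*k)).obj X by rw [mul_assoc]) := by
  have := NatTrans.congr_app (R.assoc g h k) X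
  simpa [eqToHom_app] using this

lemma unit_left_app (g : G) (X : V) :
    (R.mult 1 g).hom.app X ≫ eqToHom (show (R.rho (1*g)).obj X = (R.rho g).obj X by rw [one_mul]) =
      R.unit.hom.app ((R.rho g).obj X) := by
  have := NatTrans.congr_app (R.unit_left g) X
  simpa [eqToHom_app] using this

lemma unit_right_app (g : G) (X : V) :
    (R.mult g 1).hom.app X ≫ eqToHom (show (R.rho (g*1)).obj X = (R.rho g).obj X by rw [mul_one]) =
      (R.rho g).map (R.unit.hom.app X) := by
  have := NatTrans.congr_app (R.unit_right g) X
  simpa [eqToHom_app] using this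

lemma mult_congr_left {p q : G} (w : p = q) (k : G) (X : V) :
    eqToHom (show (R.rho p).obj ((R.rho k).obj X) = (R.rho q).obj ((R.rho k).obj X) by rw [w]) ≫
      (R.mult q k).hom.app X =
    (R.mult p k).hom.app X ≫ eqToHom (show (R.rho (p*k)).obj X = (R.rho (q*k)).obj X by rw [w]) := by
  subst w; simp

lemma mult_congr_right {p q : G} (w : p = q) (g : G) (X : V) :
    (R.rho g).map (eqToHom (show (R.rho p).obj X = (R.rho q).obj X by rw [w])) ≫
      (R.mult g q).hom.app X =
    (R.mult g p).hom.app X ≫ eqToHom (show (R.rho (g*p)).obj X = (R.rho (g*q)).obj X by rw [w]) := by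
  subst w; simp

def conjAux (f g a : G) (w : g * a = 1) (φ : 𝟭 V ⟶ R.rho f) : 𝟭 V ⟶ R.rho (g * f * a) :=
  R.unit.inv ≫ eqToHom (show R.rho 1 = R.rho (g * a) by rw [w]) ≫ (R.mult g a).inv ≫
    Functor.whiskerLeft (R.rho a) ((R.rho g).leftUnitor.inv ≫ Functor.whiskerRight φ (R.rho g)) ≫
    Functor.whiskerRight (R.mult f a).hom (R.rho g) ≫ (R.mult g (f * a)).hom ≫
    eqToHom (show R.rho (g * (f * a)) = R.rho (g * f * a) by rw [mul_assoc])

lemma conj_eq_conjAux (f g : G) (φ : 𝟭 V ⟶ R.rho f) :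
    R.conj f g φ = R.conjAux f g g⁻¹ (mul_inv_cancel g) φ := rfl

lemma conjAux_app (f g a : G) (w : g * a = 1) (φ : 𝟭 V ⟶ R.rho f) (X : V) :
    (R.conjAux f g a w φ).app X =
    R.unit.inv.app X ≫ eqToHom (show (R.rho 1).obj X = (R.rho (g*a)).obj X by rw [w]) ≫
      (R.mult g a).inv.app X ≫ (R.rho g).map (φ.app ((R.rho a).obj X)) ≫
      (R.rho g).map ((R.mult f a).hom.app X) ≫ (R.mult g (f*a)).hom.app X ≫
      eqToHom (show (R.rho (g*(f*a))).obj X = (R.rho (g*f*a)).obj X by rw [mul_assoc]) := by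
  simp [conjAux, eqToHom_app]

end TwoRep
namespace TwoRep
variable (R : TwoRep G V)

lemma conjAux_one (f : G) (w : (1:G) * 1 = 1) (φ : 𝟭 V ⟶ R.rho f) :
    R.conjAux f 1 1 w φ = φ ≫ eqToHom (show R.rho f = R.rho (1*f*1) by rw [one_mul, mul_one]) := by
  ext X
  rw [conjAux_app]
  have h1 : (R.mult 1 (f*1)).hom.app X = R.unit.hom.app ((R.rho (f*1)).obj X) ≫
      eqToHom (show (R.rho (f*1)).obj X = (R.rho (1*(f*1))).obj X by rw [one_mul]) := by
    rw [← R.unit_left_app (f*1) X]; simp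
  have key : (R.rho 1).map (φ.app ((R.rho 1).obj X)) ≫ (R.rho 1).map ((R.mult f 1).hom.app X) ≫
      R.unit.hom.app ((R.rho (f*1)).obj X) =
      R.unit.hom.app ((R.rho 1).obj X) ≫ φ.app ((R.rho 1).obj X) ≫ (R.mult f 1).hom.app X := by
    have := R.unit.hom.naturality (φ.app ((R.rho 1).obj X) ≫ (R.mult f 1).hom.app X)
    simpa using this
  have h3 : (R.mult 1 1).inv.app X ≫ R.unit.hom.app ((R.rho 1).obj X) =
      eqToHom (show (R.rho ((1:G)*1)).obj X = (R.rho (1:G)).obj X by rw [one_mul]) := by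
    rw [← R.unit_left_app 1 X]
    simp
  have h5 : R.unit.inv.app X ≫ φ.app ((R.rho 1).obj X) =
      φ.app X ≫ (R.rho f).map (R.unit.inv.app X) := by
    have := φ.naturality (R.unit.inv.app X)
    simpa using this
  have h6 : (R.mult f 1).hom.app X = (R.rho f).map (R.unit.hom.app X) ≫
      eqToHom (show (R.rho f).obj X = (R.rho (f*1)).obj X by rw [mul_one]) := by
    rw [← R.unit_right_app f X]; simp
  slice_lhs 6 6 => rw [h1]
  slice_lhs 4 6 => rw [key]
  slice_lhs 3 4 => rw [h3]
  slice_lhs 2 3 => rw [eqToHom_trans]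
  simp only [eqToHom_refl, Category.id_comp, Category.assoc]
  slice_lhs 1 2 => rw [h5]
  slice_lhs 3 3 => rw [h6]
  slice_lhs 2 3 => rw [← Functor.map_comp, Iso.inv_hom_id_app]
  simp [eqToHom_trans, eqToHom_app]

end TwoRep
namespace TwoRep
variable (R : TwoRep G V)

lemma mult_hom_app_assoc' (p q k : G) (X : V) :
    (R.rho p).map ((R.mult q k).hom.app X) ≫ (R.mult p (q*k)).hom.app X =
    (R.mult p q).hom.app ((R.rho k).obj X) ≫ (R.mult (p*q) k).hom.app X ≫
      eqToHom (show (R.rho (p*q*k)).obj X = (R.rho (p*(q*k))).obj X by rw [mul_assoc]) := by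
  rw [← cancel_mono (eqToHom (show (R.rho (p*(q*k))).obj X = (R.rho (p*q*k)).obj X by
    rw [mul_assoc]))]
  simp only [Category.assoc, eqToHom_trans, eqToHom_refl, Category.comp_id]
  rw [← R.mult_hom_app_assoc p q k X]

lemma split_unit (g a h b : G) (wg : g*a = 1) (wh : h*b = 1) (w2 : (g*h)*(b*a) = 1) (X : V) :
    R.unit.inv.app X ≫
      eqToHom (show (R.rho 1).obj X = (R.rho ((g*h)*(b*a))).obj X by rw [w2]) ≫
      (R.mult (g*h) (b*a)).inv.app X =
    R.unit.inv.app X ≫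
      eqToHom (show (R.rho 1).obj X = (R.rho (g*a)).obj X by rw [wg]) ≫
      (R.mult g a).inv.app X ≫
      (R.rho g).map (R.unit.inv.app ((R.rho a).obj X) ≫
        eqToHom (show (R.rho 1).obj ((R.rho a).obj X) = (R.rho (h*b)).obj ((R.rho a).obj X) by
          rw [wh]) ≫
        (R.mult h b).inv.app ((R.rho a).obj X)) ≫
      (R.rho g).map ((R.rho h).map ((R.mult b a).hom.app X)) ≫
      (R.mult g h).hom.app ((R.rho (b*a)).obj X) := by
  rw [← cancel_mono ((R.mult (g*h) (b*a)).hom.app X)]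
  have hnat1 : (R.rho g).map ((R.rho h).map ((R.mult b a).hom.app X)) ≫
      (R.mult g h).hom.app ((R.rho (b*a)).obj X) =
      (R.mult g h).hom.app ((R.rho b).obj ((R.rho a).obj X)) ≫
        (R.rho (g*h)).map ((R.mult b a).hom.app X) := by
    simpa using (R.mult g h).hom.naturality ((R.mult b a).hom.app X)
  have hx : (R.unit.inv.app ((R.rho a).obj X) ≫
      eqToHom (show (R.rho 1).obj ((R.rho a).obj X) = (R.rho (h*b)).obj ((R.rho a).obj X) by
        rw [wh]) ≫
      (R.mult h b).inv.app ((R.rho a).obj X)) ≫ (R.mult h b).hom.app ((R.rho a).obj X) =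
      R.unit.inv.app ((R.rho a).obj X) ≫
        eqToHom (show (R.rho 1).obj ((R.rho a).obj X) = (R.rho (h*b)).obj ((R.rho a).obj X) by
          rw [wh]) := by
    simp
  have hf : (R.rho g).map (R.unit.inv.app ((R.rho a).obj X) ≫
      eqToHom (show (R.rho 1).obj ((R.rho a).obj X) = (R.rho (h*b)).obj ((R.rho a).obj X) by
        rw [wh])) ≫
      (R.mult g (h*b)).hom.app ((R.rho a).obj X) =
      (R.rho g).map (R.unit.inv.app ((R.rho a).obj X)) ≫
        (R.mult g 1).hom.app ((R.rho a).obj X) ≫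
        eqToHom (show (R.rho (g*1)).obj ((R.rho a).obj X) =
          (R.rho (g*(h*b))).obj ((R.rho a).obj X) by rw [wh, mul_one]) := by
    rw [Functor.map_comp, Category.assoc, R.mult_congr_right wh.symm g ((R.rho a).obj X)]
  have hg : (R.mult g 1).hom.app ((R.rho a).obj X) =
      (R.rho g).map (R.unit.hom.app ((R.rho a).obj X)) ≫
      eqToHom (show (R.rho g).obj ((R.rho a).obj X) = (R.rho (g*1)).obj ((R.rho a).obj X) by
        rw [mul_one]) := by
    rw [← R.unit_right_app g ((R.rho a).obj X)]; simp
  simp only [Category.assoc]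
  rw [reassoc_of% hnat1]
  rw [R.mult_hom_app_assoc' (g*h) b a X]
  rw [reassoc_of% (R.mult_hom_app_assoc g h b ((R.rho a).obj X))]
  rw [reassoc_of% (R.mult_congr_left (show g*(h*b) = g*h*b by rw [mul_assoc]) a X)]
  rw [← Functor.map_comp_assoc, hx]
  rw [reassoc_of% hf]
  rw [hg]
  simp only [Category.assoc]
  rw [← Functor.map_comp_assoc]
  simp only [Iso.inv_hom_id_app, Functor.id_obj, CategoryTheory.Functor.map_id]
  simp only [Category.id_comp, Category.assoc, eqToHom_trans, eqToHom_trans_assoc]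
  rw [reassoc_of% (R.mult_congr_left (show g = g*(h*b) by rw [wh, mul_one]) a X)]
  simp [eqToHom_trans]

end TwoRep
namespace TwoRep
variable (R : TwoRep G V)

lemma mult_naturality' (g h : G) {A B : V} (ψ : A ⟶ B) :
    (R.rho g).map ((R.rho h).map ψ) ≫ (R.mult g h).hom.app B =
      (R.mult g h).hom.app A ≫ (R.rho (g*h)).map ψ := by
  simpa using (R.mult g h).hom.naturality ψ

lemma conjAux_mul (f g a h b : G) (wg : g*a = 1) (wh : h*b = 1) (w2 : (g*h)*(b*a) = 1)
    (φ : 𝟭 V ⟶ R.rho f) :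
    R.conjAux f (g*h) (b*a) w2 φ =
    R.conjAux (h*f*b) g a wg (R.conjAux f h b wh φ) ≫
      eqToHom (show R.rho (g*(h*f*b)*a) = R.rho ((g*h)*f*(b*a)) by
        rw [show g*(h*f*b)*a = (g*h)*f*(b*a) by simp [mul_assoc]]) := by
  ext X
  rw [conjAux_app, NatTrans.comp_app, conjAux_app,
    R.conjAux_app f h b wh φ ((R.rho a).obj X), eqToHom_app]
  -- LHS reduction
  conv_lhs => rw [reassoc_of% (R.split_unit g a h b wg wh w2 X)]
  rw [← reassoc_of% (R.mult_naturality' g h (φ.app ((R.rho (b*a)).obj X)))]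
  rw [← reassoc_of% (R.mult_naturality' g h ((R.mult f (b*a)).hom.app X))]
  have h4 : (R.mult b a).hom.app X ≫ φ.app ((R.rho (b*a)).obj X) =
      φ.app ((R.rho b).obj ((R.rho a).obj X)) ≫ (R.rho f).map ((R.mult b a).hom.app X) := by
    simpa using φ.naturality ((R.mult b a).hom.app X)
  have inner0 : (R.mult b a).hom.app X ≫ φ.app ((R.rho (b*a)).obj X) ≫
      (R.mult f (b*a)).hom.app X =
      φ.app ((R.rho b).obj ((R.rho a).obj X)) ≫ (R.mult f b).hom.app ((R.rho a).obj X) ≫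
        (R.mult (f*b) a).hom.app X ≫
        eqToHom (show (R.rho (f*b*a)).obj X = (R.rho (f*(b*a))).obj X by rw [mul_assoc]) := by
    rw [reassoc_of% h4, R.mult_hom_app_assoc' f b a X]
  have inner1 := congrArg (R.rho h).map inner0
  simp only [Functor.map_comp] at inner1
  have inner2 := congrArg (R.rho g).map inner1
  simp only [Functor.map_comp] at inner2
  rw [reassoc_of% inner2]
  rw [reassoc_of% (R.mult_naturality' g h
    (eqToHom (show (R.rho (f*b*a)).obj X = (R.rho (f*(b*a))).obj X by rw [mul_assoc])))]
  rw [reassoc_of% (R.mult_congr_right (show f*b*a = f*(b*a) by rw [mul_assoc]) (g*h) X)]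
  rw [reassoc_of% (R.mult_naturality' g h ((R.mult (f*b) a).hom.app X))]
  rw [reassoc_of% (R.mult_hom_app_assoc' (g*h) (f*b) a X)]
  rw [reassoc_of% (R.mult_hom_app_assoc g h (f*b) ((R.rho a).obj X))]
  rw [reassoc_of% (R.mult_congr_left (show g*(h*(f*b)) = g*h*(f*b) by rw [mul_assoc]) a X)]
  rw [reassoc_of% (R.mult_hom_app_assoc g (h*(f*b)) a X)]
  -- RHS reduction
  have r1 := R.mult_congr_left (show h*(f*b) = h*f*b by rw [mul_assoc]) a X
  have r2 := congrArg (R.rho g).map r1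
  simp only [Functor.map_comp] at r2
  conv_rhs => simp only [Functor.map_comp, Category.assoc]
  conv_rhs => rw [reassoc_of% r2]
  conv_rhs => rw [reassoc_of% (R.mult_congr_right
    (show (h*(f*b))*a = (h*f*b)*a by simp [mul_assoc]) g X)]
  simp only [Functor.map_comp, Category.assoc, eqToHom_trans, eqToHom_trans_assoc,
    eqToHom_map, Functor.id_obj]
end TwoRep
namespace TwoRep
variable (R : TwoRep G V)

lemma conjAux_congr_a {a a' : G} (h : a = a') (f g : G) (w : g * a = 1) (w' : g * a' = 1)
    (φ : 𝟭 V ⟶ R.rho f) :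
    R.conjAux f g a w φ = R.conjAux f g a' w' φ ≫
      eqToHom (show R.rho (g*f*a') = R.rho (g*f*a) by rw [h]) := by
  subst h; simp

lemma conjAux_congr_g {g g' : G} (h : g = g') (f a : G) (w : g * a = 1) (w' : g' * a = 1)
    (φ : 𝟭 V ⟶ R.rho f) :
    R.conjAux f g a w φ = R.conjAux f g' a w' φ ≫
      eqToHom (show R.rho (g'*f*a) = R.rho (g*f*a) by rw [h]) := by
  subst h; simp

lemma conjAux_congr_f {f f' : G} (h : f = f') (g a : G) (w : g * a = 1)
    (φ : 𝟭 V ⟶ R.rho f) :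
    R.conjAux f' g a w (φ ≫ eqToHom (show R.rho f = R.rho f' by rw [h])) =
      R.conjAux f g a w φ ≫ eqToHom (show R.rho (g*f*a) = R.rho (g*f'*a) by rw [h]) := by
  subst h; simp

lemma conj_left_inv (f g : G) (φ : 𝟭 V ⟶ R.rho f) :
    R.conj (g*f*g⁻¹) g⁻¹ (R.conj f g φ) ≫
      eqToHom (show R.rho (g⁻¹*(g*f*g⁻¹)*g⁻¹⁻¹) = R.rho f by
        rw [show g⁻¹*(g*f*g⁻¹)*g⁻¹⁻¹ = f by simp [mul_assoc]]) = φ := by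
  have e1 := R.conjAux_mul f g⁻¹ g g g⁻¹ (by simp [mul_assoc]) (by simp [mul_assoc]) (by simp [mul_assoc]) φ
  have e1' : R.conjAux (g*f*g⁻¹) g⁻¹ g (by simp [mul_assoc]) (R.conjAux f g g⁻¹ (by simp [mul_assoc]) φ) =
      R.conjAux f (g⁻¹*g) (g⁻¹*g) (by simp [mul_assoc]) φ ≫
        eqToHom (show R.rho ((g⁻¹*g)*f*(g⁻¹*g)) = R.rho (g⁻¹*(g*f*g⁻¹)*g) by
          rw [show g⁻¹*(g*f*g⁻¹)*g = (g⁻¹*g)*f*(g⁻¹*g) by simp [mul_assoc]]) := by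
    rw [e1]; simp
  rw [conj_eq_conjAux, conj_eq_conjAux,
      R.conjAux_congr_a (inv_inv g) (g*f*g⁻¹) g⁻¹ (by simp [mul_assoc]) (by simp [mul_assoc]), e1',
      R.conjAux_congr_g (inv_mul_cancel g) f (g⁻¹*g) (by simp [mul_assoc]) (by simp [mul_assoc]),
      R.conjAux_congr_a (inv_mul_cancel g) f 1 (by simp [mul_assoc]) (by simp [mul_assoc]),
      R.conjAux_one]
  simp

lemma conj_right_inv (f g : G) (ψ : 𝟭 V ⟶ R.rho (g*f*g⁻¹)) :
    R.conj f g (R.conj (g*f*g⁻¹) g⁻¹ ψ ≫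
      eqToHom (show R.rho (g⁻¹*(g*f*g⁻¹)*g⁻¹⁻¹) = R.rho f by
        rw [show g⁻¹*(g*f*g⁻¹)*g⁻¹⁻¹ = f by simp [mul_assoc]])) = ψ := by
  have e2 := R.conjAux_mul (g*f*g⁻¹) g g⁻¹ g⁻¹ g (by simp [mul_assoc]) (by simp [mul_assoc]) (by simp [mul_assoc]) ψ
  have e2' : R.conjAux (g⁻¹*(g*f*g⁻¹)*g) g g⁻¹ (by simp [mul_assoc])
        (R.conjAux (g*f*g⁻¹) g⁻¹ g (by simp [mul_assoc]) ψ) =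
      R.conjAux (g*f*g⁻¹) (g*g⁻¹) (g*g⁻¹) (by simp [mul_assoc]) ψ ≫
        eqToHom (show R.rho ((g*g⁻¹)*(g*f*g⁻¹)*(g*g⁻¹)) = R.rho (g*(g⁻¹*(g*f*g⁻¹)*g)*g⁻¹) by
          rw [show g*(g⁻¹*(g*f*g⁻¹)*g)*g⁻¹ = (g*g⁻¹)*(g*f*g⁻¹)*(g*g⁻¹) by simp [mul_assoc]]) := by
    rw [e2]; simp
  rw [conj_eq_conjAux, conj_eq_conjAux,
      R.conjAux_congr_a (inv_inv g) (g*f*g⁻¹) g⁻¹ (by simp [mul_assoc]) (by simp [mul_assoc])]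
  simp only [Category.assoc, eqToHom_trans]
  rw [R.conjAux_congr_f (show g⁻¹*(g*f*g⁻¹)*g = f by simp [mul_assoc]) g g⁻¹ (by simp [mul_assoc]), e2',
      R.conjAux_congr_g (mul_inv_cancel g) (g*f*g⁻¹) (g*g⁻¹) (by simp [mul_assoc]) (by simp [mul_assoc]),
      R.conjAux_congr_a (mul_inv_cancel g) (g*f*g⁻¹) 1 (by simp [mul_assoc]) (by simp [mul_assoc]),
      R.conjAux_one]
  simp

end TwoRep


/-- **The categorical character is a functor on the inertia groupoid.**
For a 2-representation `ρ` of `G`, the maps `ψ_f(g) : Tr(ρ(f)) → Tr(ρ(g f g⁻¹))` are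
bijections satisfying `ψ(gh) = ψ(g) ∘ ψ(h)` and `ψ(1) = id`; that is, `g ↦ Tr(ρ(g))`
extends to a functor from the inertia groupoid `Λ(G)` to `Set`. -/
theorem twoCharacter_is_inertia_functor (R : TwoRep G V) :
    (∀ f g : G, Function.Bijective (R.conj f g)) ∧
    (∀ (f g h : G) (φ : 𝟭 V ⟶ R.rho f),
      R.conj f (g * h) φ =
        R.conj (h * f * h⁻¹) g (R.conj f h φ) ≫
          eqToHom (show R.rho (g * (h * f * h⁻¹) * g⁻¹) = R.rho ((g * h) * f * (g * h)⁻¹) by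
            rw [show g * (h * f * h⁻¹) * g⁻¹ = (g * h) * f * (g * h)⁻¹ by group])) ∧
    (∀ (f : G) (φ : 𝟭 V ⟶ R.rho f),
      R.conj f 1 φ = φ ≫ eqToHom (show R.rho f = R.rho (1 * f * 1⁻¹) by simp)) := by
  refine ⟨fun f g => ?_, fun f g h φ => ?_, fun f φ => ?_⟩
  · exact Function.bijective_iff_has_inverse.mpr
      ⟨fun ψ => R.conj (g*f*g⁻¹) g⁻¹ ψ ≫
          eqToHom (show R.rho (g⁻¹*(g*f*g⁻¹)*g⁻¹⁻¹) = R.rho f by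
            rw [show g⁻¹*(g*f*g⁻¹)*g⁻¹⁻¹ = f by group]),
        R.conj_left_inv f g, R.conj_right_inv f g⟩
  · rw [TwoRep.conj_eq_conjAux, TwoRep.conj_eq_conjAux, TwoRep.conj_eq_conjAux,
        R.conjAux_congr_a (mul_inv_rev g h) f (g*h) (by group) (by group),
        R.conjAux_mul f g g⁻¹ h h⁻¹ (by group) (by group) (by group)]
    simp
  · rw [TwoRep.conj_eq_conjAux, R.conjAux_congr_a inv_one f 1 (by group) (by group),
        R.conjAux_one]
    simp
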